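/- For ν, σ > 0, t > 0 and x, y ∈ ℝ, ∫₀ᵗ G_ν(s,x)·G_σ(t−s,y) ds = (1/(2√(νσ))) · Erfc((1/√(2t))·(|x|/√ν + |y|/√σ)), where Erfc(x) = (2/√π)∫ₓ^∞ e^{−u²} du. -/

import Mathlib

noncomputable def heatKernel (ν t x : ℝ) : ℝ :=
  (1 / Real.sqrt (2 * Real.pi * ν * t)) * Real.exp (-(x ^ 2) / (2 * ν * t))

noncomputable def Erfc (x : ℝ) : ℝ :=
  (2 / Real.sqrt Real.pi) * ∫ u in Set.Ioi x, Real.exp (-u ^ 2)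

open Real MeasureTheory Set

lemma glasser_pos {c γ : ℝ} (hc : 0 < c) (hγ : 0 < γ) :
    ∫ u in Ioi (0:ℝ), Real.exp (-(c^2/u^2 + γ*u^2)) =
      Real.sqrt π / (2 * Real.sqrt γ) * Real.exp (-(2*c*Real.sqrt γ)) := by
  set g := Real.sqrt γ with hgdef
  have hg : 0 < g := Real.sqrt_pos.mpr hγ
  have hg2 : g^2 = γ := Real.sq_sqrt hγ.le
  set d : ℝ := 4*c*g with hddef
  have hd : 0 < d := by positivity
  set w : ℝ → ℝ := fun v => Real.sqrt (v^2 + d) with hwdef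
  have hw : ∀ v, 0 < w v := fun v => Real.sqrt_pos.mpr (by positivity)
  have hw2 : ∀ v, (w v)^2 = v^2 + d := fun v => Real.sq_sqrt (by positivity)
  have hwv : ∀ v, -v < w v := by
    intro v
    have h1 : |v| < w v := by
      rw [← Real.sqrt_sq_eq_abs]
      exact Real.sqrt_lt_sqrt (by positivity) (by linarith)
    calc -v ≤ |v| := neg_le_abs v
    _ < w v := h1
  have hwv' : ∀ v, v < w v := by
    intro v
    have h1 : |v| < w v := by
      rw [← Real.sqrt_sq_eq_abs]
      exact Real.sqrt_lt_sqrt (by positivity) (by linarith)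
    calc v ≤ |v| := le_abs_self v
    _ < w v := h1
  set h : ℝ → ℝ := fun v => (v + w v)/(2*g) with hhdef
  have hh : ∀ v, 0 < h v := by
    intro v
    have := hwv v
    have : 0 < v + w v := by linarith
    positivity
  have hq : ∀ v, g * (h v)^2 - v * (h v) - c = 0 := by
    intro v
    have h2 := hw2 v
    simp only [hhdef]
    field_simp
    nlinarith [h2]
  have key : ∀ v, g * h v - c / h v = v := by
    intro v
    have h1 := hq v
    have h2 := (hh v).ne'
    field_simp
    nlinarith [h1]
  -- image
  have himg : h '' univ = Ioi 0 := by
    apply Set.eq_of_subset_of_subset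
    · rintro u ⟨v, -, rfl⟩; exact hh v
    · rintro u hu
      have hu0 : 0 < u := hu
      refine ⟨g*u - c/u, trivial, ?_⟩
      have h1 := hq (g*u - c/u)
      have h2 : g * u^2 - (g*u - c/u) * u - c = 0 := by field_simp; ring
      set z := h (g*u - c/u) with hz
      have hz0 : 0 < z := hh _
      have h3 : (z - u) * (g*(z+u) - (g*u - c/u)) = 0 := by nlinarith [h1, h2]
      rcases mul_eq_zero.mp h3 with h4 | h4
      · linarith
      · exfalso
        have h5 : g*u - c/u = g*(z+u) := by linarith
        rw [h5] at h1
        nlinarith [mul_pos (mul_pos hg hu0) hz0]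
  -- injectivity
  have hinj : Set.InjOn h univ := by
    intro a _ b _ hab
    have := key a
    rw [hab, key b] at this
    exact this.symm
  -- derivative
  set h' : ℝ → ℝ := fun v => (1 + v / w v)/(2*g) with hh'def
  have hderiv : ∀ v ∈ (univ : Set ℝ), HasDerivWithinAt h (h' v) univ v := by
    intro v _
    have h1 : HasDerivAt (fun x : ℝ => x^2 + d) (2*v) v := by
      simpa using (hasDerivAt_pow 2 v).add_const d
    have h2 : HasDerivAt (fun x : ℝ => Real.sqrt (x^2+d)) (1/(2*Real.sqrt (v^2+d)) * (2*v)) v :=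
      (Real.hasDerivAt_sqrt (by positivity)).comp v h1
    have h3 : HasDerivAt h ((1 + 1/(2*Real.sqrt (v^2+d)) * (2*v))/(2*g)) v :=
      ((hasDerivAt_id v).add h2).div_const (2*g)
    have h4 : (1 + 1/(2*Real.sqrt (v^2+d)) * (2*v))/(2*g) = h' v := by
      have := (hw v).ne'
      simp only [hh'def, hwdef] at *
      field_simp
    rw [← h4]
    exact h3.hasDerivWithinAt
  have h'pos : ∀ v, 0 < h' v := by
    intro v
    have h1 : -1 < v / w v := by
      rw [lt_div_iff₀ (hw v)]
      nlinarith [hwv v]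
    have : 0 < 1 + v / w v := by linarith
    positivity
  -- exponent identity
  have hexp : ∀ v, c^2/(h v)^2 + γ*(h v)^2 = v^2 + 2*c*g := by
    intro v
    have h1 := key v
    have h2 := (hh v).ne'
    have h3 : (g * h v - c / h v)^2 = v^2 := by rw [h1]
    field_simp at h3 ⊢
    rw [← hg2]
    linear_combination h3
  -- change of variables
  rw [← himg, integral_image_eq_integral_abs_deriv_smul MeasurableSet.univ hderiv hinj]
  rw [Measure.restrict_univ]
  have hrw : ∀ v : ℝ, |h' v| • Real.exp (-(c^2/(h v)^2 + γ*(h v)^2)) =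
      Real.exp (-(2*c*g)) * ((1/(2*g)) * Real.exp (-v^2) + (1/(2*g)) * (v / w v * Real.exp (-v^2))) := by
    intro v
    rw [abs_of_pos (h'pos v), hexp v, smul_eq_mul]
    rw [show -(v^2 + 2*c*g) = -v^2 + -(2*c*g) by ring, Real.exp_add]
    simp only [hh'def]
    ring
  simp only [hrw]
  rw [integral_const_mul]
  have hint1 : Integrable (fun v : ℝ => (1/(2*g)) * Real.exp (-v^2)) := by
    have : Integrable (fun v : ℝ => Real.exp (-(1:ℝ)*v^2)) := integrable_exp_neg_mul_sq one_pos
    simpa using this.const_mul (1/(2*g))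
  have hcw : Continuous w := Real.continuous_sqrt.comp ((continuous_pow 2).add continuous_const)
  have hcont : Continuous (fun v : ℝ => v / w v * Real.exp (-v^2)) := by
    apply Continuous.mul
    · exact continuous_id.div hcw (fun v => (hw v).ne')
    · exact Real.continuous_exp.comp (continuous_pow 2).neg
  have hint2 : Integrable (fun v : ℝ => (1/(2*g)) * (v / w v * Real.exp (-v^2))) := by
    apply Integrable.const_mul
    apply Integrable.mono (g := fun v : ℝ => Real.exp (-(1:ℝ)*v^2)) (integrable_exp_neg_mul_sq one_pos)
      hcont.aestronglyMeasurable
    filter_upwards with v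
    rw [norm_mul, Real.norm_eq_abs (Real.exp _), abs_of_pos (Real.exp_pos _),
      Real.norm_eq_abs, abs_div]
    have h1 : |v| / |w v| ≤ 1 := by
      rw [div_le_one (by rw [abs_of_pos (hw v)]; exact hw v)]
      rw [abs_of_pos (hw v)]
      rcases abs_cases v with ⟨he, _⟩ | ⟨he, _⟩
      · rw [he]; exact (hwv' v).le
      · rw [he]; exact (hwv v).le
    calc |v| / |w v| * Real.exp (-v^2) ≤ 1 * Real.exp (-v^2) :=
          mul_le_mul_of_nonneg_right h1 (Real.exp_pos _).le
    _ = Real.exp (-(1:ℝ)*v^2) := by rw [one_mul, neg_mul, one_mul]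
    _ ≤ ‖Real.exp (-(1:ℝ)*v^2)‖ := le_abs_self _
  rw [integral_add hint1 hint2, integral_const_mul, integral_const_mul]
  have hodd : ∫ v : ℝ, v / w v * Real.exp (-v^2) = 0 := by
    have h1 : ∫ v : ℝ, (fun v : ℝ => v / w v * Real.exp (-v^2)) (-v) =
        ∫ v : ℝ, v / w v * Real.exp (-v^2) :=
      integral_neg_eq_self (fun v : ℝ => v / w v * Real.exp (-v^2)) volume
    have h2 : ∀ v : ℝ, (fun v : ℝ => v / w v * Real.exp (-v^2)) (-v) =
        -(v / w v * Real.exp (-v^2)) := by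
      intro v
      simp only [hwdef, neg_sq, neg_div, neg_mul]
    simp only [h2, integral_neg] at h1
    linarith
  have hgauss : ∫ v : ℝ, Real.exp (-v^2) = Real.sqrt π := by
    have := integral_gaussian 1
    simpa using this
  rw [hodd, hgauss]
  ring

lemma glasser {α γ : ℝ} (hα : 0 ≤ α) (hγ : 0 < γ) :
    ∫ u in Ioi (0:ℝ), Real.exp (-(α/u^2 + γ*u^2)) =
      Real.sqrt π / (2 * Real.sqrt γ) * Real.exp (-(2*Real.sqrt α*Real.sqrt γ)) := by
  rcases eq_or_lt_of_le hα with h0 | h0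
  · rw [← h0]
    simp only [zero_div, zero_add, Real.sqrt_zero, mul_zero, zero_mul, neg_zero, Real.exp_zero,
      mul_one]
    have : ∀ u : ℝ, Real.exp (-(γ*u^2)) = Real.exp (-γ*u^2) := by intro u; rw [neg_mul]
    simp only [this]
    rw [integral_gaussian_Ioi γ, Real.sqrt_div pi_pos.le]
    ring
  · have h1 := glasser_pos (Real.sqrt_pos.mpr h0) hγ
    rw [Real.sq_sqrt h0.le] at h1
    exact h1

lemma exp_decay_int {b : ℝ} (hb : 0 < b) :
    ∫ w in Ioi (0:ℝ), Real.exp (-(b*w)) = b⁻¹ := by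
  have h1 := integral_comp_mul_left_Ioi (fun x => Real.exp (-x)) 0 hb
  simp only [mul_zero, integral_exp_neg_Ioi, neg_zero, Real.exp_zero, smul_eq_mul, mul_one] at h1
  simpa only [neg_mul] using h1

lemma M_symm (α β : ℝ) :
    ∫ u in Ioi (0:ℝ), Real.exp (-(α/u^2 + β*u^2)) / (1+u^2) =
    ∫ u in Ioi (0:ℝ), Real.exp (-(β/u^2 + α*u^2)) / (1+u^2) := by
  have himg : (fun v : ℝ => v⁻¹) '' (Ioi 0) = Ioi 0 := by
    apply Set.eq_of_subset_of_subset
    · rintro u ⟨v, hv, rfl⟩; exact mem_Ioi.mpr (inv_pos.mpr (mem_Ioi.mp hv))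
    · rintro u hu; exact ⟨u⁻¹, mem_Ioi.mpr (inv_pos.mpr (mem_Ioi.mp hu)), inv_inv u⟩
  have hderiv : ∀ v ∈ Ioi (0:ℝ), HasDerivWithinAt (fun v : ℝ => v⁻¹) (-((v^2)⁻¹)) (Ioi 0) v :=
    fun v hv => (hasDerivAt_inv (ne_of_gt hv)).hasDerivWithinAt
  have hinj : Set.InjOn (fun v : ℝ => v⁻¹) (Ioi 0) := fun a _ b _ h => inv_injective h
  conv_lhs => rw [← himg]
  rw [integral_image_eq_integral_abs_deriv_smul measurableSet_Ioi hderiv hinj]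
  apply setIntegral_congr_fun measurableSet_Ioi
  intro v hv
  have hv0 : (0:ℝ) < v := hv
  have hv2 : (0:ℝ) < v^2 := by positivity
  have h1 : α/(v⁻¹)^2 + β*(v⁻¹)^2 = β/v^2 + α*v^2 := by
    field_simp
    ring
  simp only [smul_eq_mul, abs_neg, abs_inv, h1, abs_of_pos hv2]
  have h2 : (1:ℝ)+v⁻¹^2 ≠ 0 := by positivity
  have h3 : (1:ℝ)+v^2 ≠ 0 := by positivity
  field_simp
  ring

lemma M_eval_pos {α β : ℝ} (hα : 0 ≤ α) (hβ : 0 < β) :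
    ∫ u in Ioi (0:ℝ), Real.exp (-(α/u^2 + β*u^2)) / (1+u^2) =
      Real.sqrt π * Real.exp (α+β) * ∫ z in Ioi (Real.sqrt α + Real.sqrt β), Real.exp (-z^2) := by
  -- step 1 : write 1/(1+u²) as an integral
  have step1 : ∀ u ∈ Ioi (0:ℝ), Real.exp (-(α/u^2 + β*u^2)) / (1+u^2) =
      ∫ w in Ioi (0:ℝ), Real.exp (-(α/u^2 + β*u^2)) * Real.exp (-((1+u^2)*w)) := by
    intro u _
    rw [integral_const_mul, exp_decay_int (by positivity : (0:ℝ) < 1 + u^2), div_eq_mul_inv]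
  rw [setIntegral_congr_fun measurableSet_Ioi step1]
  -- Fubini
  have hbound : Integrable (fun z : ℝ × ℝ => Real.exp (-β*z.1^2) * Real.exp (-1*z.2))
      ((volume.restrict (Ioi 0)).prod (volume.restrict (Ioi 0))) :=
    Integrable.mul_prod (integrable_exp_neg_mul_sq hβ).integrableOn
      (exp_neg_integrableOn_Ioi 0 one_pos)
  have hInt : Integrable (Function.uncurry fun u w =>
      Real.exp (-(α/u^2 + β*u^2)) * Real.exp (-((1+u^2)*w)))
      ((volume.restrict (Ioi 0)).prod (volume.restrict (Ioi 0))) := by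
    apply Integrable.mono' hbound
    · apply Measurable.aestronglyMeasurable
      apply Measurable.mul
      · exact (Measurable.div measurable_const (measurable_fst.pow_const 2)).add
          ((measurable_fst.pow_const 2).const_mul β) |>.neg.exp
      · exact (((measurable_fst.pow_const 2).const_add 1).mul measurable_snd).neg.exp
    · rw [Measure.prod_restrict]
      filter_upwards [ae_restrict_mem (measurableSet_Ioi.prod measurableSet_Ioi)] with z hz
      obtain ⟨hu, hw⟩ := hz
      have hu0 : (0:ℝ) < z.1 := hu
      have hw0 : (0:ℝ) < z.2 := hw
      simp only [Function.uncurry, Real.norm_eq_abs, abs_mul, Real.abs_exp]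
      apply mul_le_mul _ _ (Real.exp_pos _).le (Real.exp_pos _).le
      · apply Real.exp_le_exp.mpr
        have : 0 ≤ α/z.1^2 := by positivity
        nlinarith
      · apply Real.exp_le_exp.mpr
        nlinarith [sq_nonneg z.1]
  rw [integral_integral_swap hInt]
  -- inner integral via glasser
  have step2 : ∀ w ∈ Ioi (0:ℝ),
      (∫ u in Ioi (0:ℝ), Real.exp (-(α/u^2 + β*u^2)) * Real.exp (-((1+u^2)*w))) =
      Real.exp (-w) * (Real.sqrt π / (2*Real.sqrt (β+w)) *
        Real.exp (-(2*Real.sqrt α * Real.sqrt (β+w)))) := by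
    intro w hw
    have hw0 : (0:ℝ) < w := hw
    have h1 : ∀ u : ℝ, Real.exp (-(α/u^2 + β*u^2)) * Real.exp (-((1+u^2)*w)) =
        Real.exp (-w) * Real.exp (-(α/u^2 + (β+w)*u^2)) := by
      intro u
      rw [← Real.exp_add, ← Real.exp_add]
      congr 1
      ring
    simp only [h1]
    rw [integral_const_mul, glasser hα (by linarith : (0:ℝ) < β + w)]
  rw [setIntegral_congr_fun measurableSet_Ioi step2]
  -- substitution w = v² - β
  have hsb : (0:ℝ) < Real.sqrt β := Real.sqrt_pos.mpr hβ
  have himg2 : (fun v : ℝ => v^2 - β) '' Ioi (Real.sqrt β) = Ioi 0 := by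
    apply Set.eq_of_subset_of_subset
    · rintro u ⟨v, hv, rfl⟩
      have h1 : Real.sqrt β < v := hv
      have h2 : (Real.sqrt β)^2 < v^2 := by
        apply pow_lt_pow_left₀ h1 (Real.sqrt_nonneg β) (by norm_num)
      rw [Real.sq_sqrt hβ.le] at h2
      simpa using h2
    · rintro u hu
      have hu0 : (0:ℝ) < u := hu
      refine ⟨Real.sqrt (β+u), ?_, ?_⟩
      · exact Real.sqrt_lt_sqrt hβ.le (by linarith)
      · show Real.sqrt (β+u)^2 - β = u
        rw [Real.sq_sqrt (by linarith : (0:ℝ) ≤ β + u)]; ring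
  have hderiv2 : ∀ v ∈ Ioi (Real.sqrt β),
      HasDerivWithinAt (fun v : ℝ => v^2 - β) (2*v) (Ioi (Real.sqrt β)) v := by
    intro v _
    have := (hasDerivAt_pow 2 v).sub_const β
    simpa using this.hasDerivWithinAt
  have hinj2 : Set.InjOn (fun v : ℝ => v^2 - β) (Ioi (Real.sqrt β)) := by
    intro a ha b hb hab
    have ha0 : 0 ≤ a := le_trans (Real.sqrt_nonneg β) (le_of_lt ha)
    have hb0 : 0 ≤ b := le_trans (Real.sqrt_nonneg β) (le_of_lt hb)
    have h1 : a^2 = b^2 := by simpa using hab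
    have h2 := congrArg Real.sqrt h1
    rwa [Real.sqrt_sq ha0, Real.sqrt_sq hb0] at h2
  rw [← himg2, integral_image_eq_integral_abs_deriv_smul measurableSet_Ioi hderiv2 hinj2]
  -- simplify integrand
  have step3 : ∀ v ∈ Ioi (Real.sqrt β), |2*v| • (Real.exp (-(v^2-β)) *
      (Real.sqrt π / (2*Real.sqrt (β+(v^2-β))) *
        Real.exp (-(2*Real.sqrt α * Real.sqrt (β+(v^2-β)))))) =
      (Real.sqrt π * Real.exp (α+β)) * Real.exp (-((v+Real.sqrt α)^2)) := by
    intro v hv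
    have hv0 : (0:ℝ) < v := lt_trans hsb hv
    rw [show β + (v^2-β) = v^2 by ring, Real.sqrt_sq hv0.le, smul_eq_mul,
      abs_of_pos (by positivity : (0:ℝ) < 2*v)]
    have e1 : Real.exp (-(v^2-β)) * Real.exp (-(2*Real.sqrt α*v)) =
        Real.exp (α+β) * Real.exp (-((v+Real.sqrt α)^2)) := by
      rw [← Real.exp_add, ← Real.exp_add]
      congr 1
      linear_combination Real.sq_sqrt hα
    calc 2*v * (Real.exp (-(v^2-β)) * (Real.sqrt π / (2*v) * Real.exp (-(2*Real.sqrt α*v))))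
        = Real.sqrt π * (Real.exp (-(v^2-β)) * Real.exp (-(2*Real.sqrt α*v))) := by
          field_simp
      _ = Real.sqrt π * (Real.exp (α+β) * Real.exp (-((v+Real.sqrt α)^2))) := by rw [e1]
      _ = (Real.sqrt π * Real.exp (α+β)) * Real.exp (-((v+Real.sqrt α)^2)) := by ring
  rw [setIntegral_congr_fun measurableSet_Ioi step3, integral_const_mul]
  congr 1
  -- translation z = v + √α
  have himg3 : (fun v : ℝ => v + Real.sqrt α) '' Ioi (Real.sqrt β) =
      Ioi (Real.sqrt β + Real.sqrt α) := Set.image_add_const_Ioi _ _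
  have hderiv3 : ∀ v ∈ Ioi (Real.sqrt β),
      HasDerivWithinAt (fun v : ℝ => v + Real.sqrt α) 1 (Ioi (Real.sqrt β)) v := by
    intro v _
    simpa using ((hasDerivAt_id v).add_const (Real.sqrt α)).hasDerivWithinAt
  rw [show Real.sqrt α + Real.sqrt β = Real.sqrt β + Real.sqrt α from add_comm _ _, ← himg3,
    integral_image_eq_integral_abs_deriv_smul measurableSet_Ioi hderiv3
      (fun a _ b _ h => by simpa using h)]
  simp

lemma M_eval {α β : ℝ} (hα : 0 ≤ α) (hβ : 0 ≤ β) :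
    ∫ u in Ioi (0:ℝ), Real.exp (-(α/u^2 + β*u^2)) / (1+u^2) =
      Real.sqrt π * Real.exp (α+β) * ∫ z in Ioi (Real.sqrt α + Real.sqrt β), Real.exp (-z^2) := by
  rcases lt_or_eq_of_le hβ with h0 | h0
  · exact M_eval_pos hα h0
  · rcases lt_or_eq_of_le hα with h1 | h1
    · rw [M_symm, M_eval_pos (le_of_eq h0) h1, add_comm β α,
        add_comm (Real.sqrt β) (Real.sqrt α)]
    · rw [← h1, ← h0]
      have hL : ∀ u : ℝ, Real.exp (-((0:ℝ)/u^2 + 0*u^2)) / (1+u^2) = (1+u^2)⁻¹ := by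
        intro u; simp
      rw [setIntegral_congr_fun measurableSet_Ioi (fun u _ => hL u), integral_Ioi_inv_one_add_sq]
      have hR : ∀ z : ℝ, Real.exp (-z^2) = Real.exp (-1*z^2) := by intro z; norm_num
      simp only [Real.sqrt_zero, add_zero, Real.exp_zero, hR, Real.arctan_zero]
      rw [integral_gaussian_Ioi 1, mul_one]
      rw [show Real.sqrt (π/1)/2 = Real.sqrt π / 2 by norm_num,
        show Real.sqrt π * (Real.sqrt π / 2) = Real.sqrt π * Real.sqrt π / 2 by ring,
        Real.mul_self_sqrt pi_pos.le]
      ring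

theorem stmt_6 (ν σ t x y : ℝ) (hν : 0 < ν) (hσ : 0 < σ) (ht : 0 < t) :
    ∫ s in (0:ℝ)..t, heatKernel ν s x * heatKernel σ (t - s) y =
      (1 / (2 * Real.sqrt (ν * σ))) *
        Erfc ((1 / Real.sqrt (2 * t)) *
          (|x| / Real.sqrt ν + |y| / Real.sqrt σ)) := by
  set α := x^2/(2*ν*t) with hαdef
  set β := y^2/(2*σ*t) with hβdef
  have hα : 0 ≤ α := by positivity
  have hβ : 0 ≤ β := by positivity
  rw [intervalIntegral.integral_of_le ht.le, integral_Ioc_eq_integral_Ioo]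
  -- substitution s = t*u^2/(1+u^2)
  have himgT : (fun u : ℝ => t*u^2/(1+u^2)) '' Ioi 0 = Ioo 0 t := by
    apply Set.eq_of_subset_of_subset
    · rintro s ⟨u, hu, rfl⟩
      have hu0 : (0:ℝ) < u := hu
      constructor
      · positivity
      · rw [div_lt_iff₀ (by positivity)]
        nlinarith
    · rintro s ⟨hs0, hst⟩
      have hts : (0:ℝ) < t - s := by linarith
      refine ⟨Real.sqrt (s/(t-s)), Real.sqrt_pos.mpr (div_pos hs0 hts), ?_⟩
      show t * Real.sqrt (s/(t-s))^2 / (1 + Real.sqrt (s/(t-s))^2) = s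
      rw [Real.sq_sqrt (div_pos hs0 hts).le]
      field_simp
      ring
  have hderivT : ∀ u ∈ Ioi (0:ℝ), HasDerivWithinAt (fun u : ℝ => t*u^2/(1+u^2))
      (2*t*u/(1+u^2)^2) (Ioi 0) u := by
    intro u _
    have h1 : HasDerivAt (fun u : ℝ => t*u^2) (t*(2*u)) u := by
      simpa [mul_comm] using (hasDerivAt_pow 2 u).const_mul t
    have h2 : HasDerivAt (fun u : ℝ => 1+u^2) (2*u) u := by
      simpa using (hasDerivAt_pow 2 u).const_add 1
    have h3 := h1.div h2 (by positivity : (1:ℝ)+u^2 ≠ 0)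
    have h4 : (t*(2*u)*(1+u^2) - t*u^2*(2*u))/(1+u^2)^2 = 2*t*u/(1+u^2)^2 := by
      congr 1
      ring
    rw [h4] at h3
    exact h3.hasDerivWithinAt
  have hinjT : Set.InjOn (fun u : ℝ => t*u^2/(1+u^2)) (Ioi 0) := by
    intro a ha b hb hab
    have ha0 : (0:ℝ) < a := ha
    have hb0 : (0:ℝ) < b := hb
    simp only at hab
    rw [div_eq_div_iff (by positivity) (by positivity)] at hab
    have h1 : a^2 = b^2 := by nlinarith
    have h2 := congrArg Real.sqrt h1
    rwa [Real.sqrt_sq ha0.le, Real.sqrt_sq hb0.le] at h2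
  rw [← himgT, integral_image_eq_integral_abs_deriv_smul measurableSet_Ioi hderivT hinjT]
  -- pointwise identity
  have hstep : ∀ u ∈ Ioi (0:ℝ), |2*t*u/(1+u^2)^2| •
      (heatKernel ν (t*u^2/(1+u^2)) x * heatKernel σ (t - t*u^2/(1+u^2)) y) =
      1/(π*Real.sqrt (ν*σ)) * Real.exp (-(α+β)) *
        (Real.exp (-(α/u^2 + β*u^2)) / (1+u^2)) := by
    intro u hu
    have hu0 : (0:ℝ) < u := hu
    have h1p : (0:ℝ) < 1+u^2 := by positivity
    rw [show t - t*u^2/(1+u^2) = t/(1+u^2) by field_simp; ring]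
    rw [heatKernel, heatKernel]
    have e1 : Real.sqrt (2*π*ν*(t*u^2/(1+u^2))) =
        Real.sqrt (2*π*ν*t) * u / Real.sqrt (1+u^2) := by
      rw [show 2*π*ν*(t*u^2/(1+u^2)) = (2*π*ν*t)*(u^2/(1+u^2)) by ring,
        Real.sqrt_mul (by positivity), Real.sqrt_div (sq_nonneg u),
        Real.sqrt_sq hu0.le, mul_div_assoc]
    have e2 : Real.sqrt (2*π*σ*(t/(1+u^2))) = Real.sqrt (2*π*σ*t) / Real.sqrt (1+u^2) := by
      rw [show 2*π*σ*(t/(1+u^2)) = (2*π*σ*t)/(1+u^2) by ring,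
        Real.sqrt_div (by positivity)]
    have e3 : -(x^2)/(2*ν*(t*u^2/(1+u^2))) = -α + -(α/u^2) := by
      rw [hαdef]
      field_simp
      ring
    have e4 : -(y^2)/(2*σ*(t/(1+u^2))) = -β + -(β*u^2) := by
      rw [hβdef]
      field_simp
      ring
    rw [e1, e2, e3, e4, Real.exp_add, Real.exp_add]
    rw [show -(α+β) = -α + -β by ring, show -(α/u^2+β*u^2) = -(α/u^2) + -(β*u^2) by ring,
      Real.exp_add, Real.exp_add]
    have hAB : Real.sqrt (2*π*ν*t) * Real.sqrt (2*π*σ*t) = 2*π*t*Real.sqrt (ν*σ) := by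
      rw [← Real.sqrt_mul (by positivity), show (2*π*ν*t)*(2*π*σ*t) = (2*π*t)^2*(ν*σ) by ring,
        Real.sqrt_mul (by positivity), Real.sqrt_sq (by positivity)]
    have hC2 : Real.sqrt (1+u^2) ^ 2 = 1+u^2 := Real.sq_sqrt h1p.le
    have hApos : 0 < Real.sqrt (2*π*ν*t) := Real.sqrt_pos.mpr (by positivity)
    have hBpos : 0 < Real.sqrt (2*π*σ*t) := Real.sqrt_pos.mpr (by positivity)
    have hCpos : 0 < Real.sqrt (1+u^2) := Real.sqrt_pos.mpr h1p
    have hVpos : 0 < Real.sqrt (ν*σ) := Real.sqrt_pos.mpr (by positivity)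
    rw [smul_eq_mul, abs_of_pos (by positivity : (0:ℝ) < 2*t*u/(1+u^2)^2)]
    field_simp
    ring_nf
    simp only [hC2, Real.sq_sqrt (by norm_num : (0:ℝ) ≤ 2), Real.sq_sqrt pi_pos.le,
      Real.sq_sqrt ht.le]
    rw [show t*π*ν*2 = 2*π*ν*t by ring, show t*π*σ*2 = 2*π*σ*t by ring]
    linear_combination (-(1+u^2)) * hAB
  rw [setIntegral_congr_fun measurableSet_Ioi hstep, integral_const_mul, M_eval hα hβ]
  -- identify the Erfc argument
  rw [Erfc]
  have harg : (1/Real.sqrt (2*t)) * (|x|/Real.sqrt ν + |y|/Real.sqrt σ) =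
      Real.sqrt α + Real.sqrt β := by
    have hsa : Real.sqrt α = |x|/(Real.sqrt (2*t) * Real.sqrt ν) := by
      rw [hαdef, show 2*ν*t = (2*t)*ν by ring, Real.sqrt_div (sq_nonneg x),
        Real.sqrt_mul (by positivity), Real.sqrt_sq_eq_abs]
    have hsb : Real.sqrt β = |y|/(Real.sqrt (2*t) * Real.sqrt σ) := by
      rw [hβdef, show 2*σ*t = (2*t)*σ by ring, Real.sqrt_div (sq_nonneg y),
        Real.sqrt_mul (by positivity), Real.sqrt_sq_eq_abs]
    rw [hsa, hsb]
    have h2t : (0:ℝ) < Real.sqrt (2*t) := Real.sqrt_pos.mpr (by positivity)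
    field_simp
  rw [harg]
  -- final scalar algebra
  have hexp : Real.exp (-(α+β)) * Real.exp (α+β) = 1 := by
    rw [← Real.exp_add, neg_add_cancel, Real.exp_zero]
  have hπ : Real.sqrt π * Real.sqrt π = π := Real.mul_self_sqrt pi_pos.le
  have hπpos : (0:ℝ) < Real.sqrt π := Real.sqrt_pos.mpr pi_pos
  have hVpos : 0 < Real.sqrt (ν*σ) := Real.sqrt_pos.mpr (by positivity)
  set I := ∫ z in Ioi (Real.sqrt α + Real.sqrt β), Real.exp (-z^2)
  calc 1/(π*Real.sqrt (ν*σ)) * Real.exp (-(α+β)) * (Real.sqrt π * Real.exp (α+β) * I)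
      = 1/(π*Real.sqrt (ν*σ)) * (Real.exp (-(α+β)) * Real.exp (α+β)) * (Real.sqrt π * I) := by
        ring
    _ = 1/(π*Real.sqrt (ν*σ)) * (Real.sqrt π * I) := by rw [hexp]; ring
    _ = 1/(2*Real.sqrt (ν*σ)) * (2/Real.sqrt π * I) := by
        field_simp
        linear_combination I * hπ
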